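/- Let D : ℕ → ℂ be an arithmetic function and α ≥ 0 with Σ_{n ≤ x} |D(n)|² ≪ x (log x)^α as x → ∞. Then for every ε > 0, Σ_{n ≤ x} |D(n)|/n ≪ (log x)^{α/2 + 1 + ε}. -/

import Mathlib

open Finset

set_option linter.unusedVariables false


-- Cauchy-Schwarz bound: sum of ‖D n‖ over n ≤ x
private lemma csb (D : ℕ → ℂ) (α C : ℝ) (hC : 0 < C)
    (hD : ∀ x : ℝ, 2 ≤ x → ∑ n ∈ Finset.Icc 1 ⌊x⌋₊, ‖D n‖ ^ 2 ≤ C * x * Real.log x ^ α)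
    (x : ℝ) (hx : 2 ≤ x) :
    ∑ n ∈ Finset.Icc 1 ⌊x⌋₊, ‖D n‖ ≤ Real.sqrt C * x * Real.log x ^ (α / 2) := by
  have hx0 : (0:ℝ) < x := by linarith
  have hL : 0 < Real.log x := Real.log_pos (by linarith)
  set S := ∑ n ∈ Finset.Icc 1 ⌊x⌋₊, ‖D n‖ with hS
  have hS0 : 0 ≤ S := Finset.sum_nonneg fun n _ => norm_nonneg _
  have h1 : S ^ 2 ≤ (⌊x⌋₊ : ℝ) * ∑ n ∈ Finset.Icc 1 ⌊x⌋₊, ‖D n‖ ^ 2 :=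
    sq_sum_le_card_mul_sum_sq.trans_eq (by rw [Nat.card_Icc]; norm_num)
  have hfl : (⌊x⌋₊ : ℝ) ≤ x := Nat.floor_le hx0.le
  have h2 : S ^ 2 ≤ x * (C * x * Real.log x ^ α) := by
    calc S ^ 2 ≤ (⌊x⌋₊ : ℝ) * ∑ n ∈ Finset.Icc 1 ⌊x⌋₊, ‖D n‖ ^ 2 := h1
      _ ≤ x * (C * x * Real.log x ^ α) := by
          apply mul_le_mul hfl (hD x hx) (Finset.sum_nonneg fun n _ => by positivity) hx0.le
  have hR : (Real.sqrt C * x * Real.log x ^ (α / 2)) ^ 2 = x * (C * x * Real.log x ^ α) := by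
    rw [mul_pow, mul_pow, Real.sq_sqrt hC.le, ← Real.rpow_natCast (Real.log x ^ (α/2)) 2,
      ← Real.rpow_mul hL.le]
    push_cast
    ring_nf
  have : S ^ 2 ≤ (Real.sqrt C * x * Real.log x ^ (α / 2)) ^ 2 := by rw [hR]; exact h2
  have hRnn : 0 ≤ Real.sqrt C * x * Real.log x ^ (α / 2) := by positivity
  nlinarith [this, hS0, hRnn]

-- bound for small x  (2 ≤ x ≤ 4)
private lemma small (D : ℕ → ℂ) (α C K : ℝ) (hC : 0 < C)
    (hD : ∀ x : ℝ, 2 ≤ x → ∑ n ∈ Finset.Icc 1 ⌊x⌋₊, ‖D n‖ ^ 2 ≤ C * x * Real.log x ^ α)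
    (hK : K = 4 * Real.sqrt C / Real.log 2)
    (x : ℝ) (hx : 2 ≤ x) (hx4 : x ≤ 4) :
    ∑ n ∈ Finset.Icc 1 ⌊x⌋₊, ‖D n‖ / (n : ℝ) ≤ K * Real.log x ^ (α / 2 + 1) := by
  have hl2 : 0 < Real.log 2 := Real.log_pos (by norm_num)
  have hL : Real.log 2 ≤ Real.log x := Real.log_le_log (by norm_num) hx
  have hL0 : 0 < Real.log x := lt_of_lt_of_le hl2 hL
  have h1 : ∑ n ∈ Finset.Icc 1 ⌊x⌋₊, ‖D n‖ / (n : ℝ) ≤ ∑ n ∈ Finset.Icc 1 ⌊x⌋₊, ‖D n‖ := by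
    apply Finset.sum_le_sum
    intro n hn
    have hn1 : 1 ≤ n := (Finset.mem_Icc.mp hn).1
    have : (1:ℝ) ≤ n := by exact_mod_cast hn1
    rw [div_le_iff₀ (by linarith)]
    nlinarith [norm_nonneg (D n)]
  have h2 := csb D α C hC hD x hx
  have h3 : Real.sqrt C * x * Real.log x ^ (α / 2) ≤ 4 * Real.sqrt C * Real.log x ^ (α/2) := by
    have : (0:ℝ) ≤ Real.log x ^ (α/2) := by positivity
    nlinarith [mul_nonneg (mul_nonneg (by linarith : (0:ℝ) ≤ 4 - x) (Real.sqrt_nonneg C)) this]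
  have h4 : K * Real.log x ^ (α/2+1) = K * Real.log x ^ (α/2) * Real.log x := by
    rw [Real.rpow_add_one hL0.ne', mul_assoc]
  have hK0 : 0 < K := by rw [hK]; positivity
  calc ∑ n ∈ Finset.Icc 1 ⌊x⌋₊, ‖D n‖ / (n : ℝ) ≤ 4 * Real.sqrt C * Real.log x ^ (α/2) :=
        le_trans h1 (le_trans h2 h3)
    _ = K * Real.log 2 * Real.log x ^ (α/2) := by rw [hK]; field_simp
    _ ≤ K * Real.log x ^ (α/2) * Real.log x := by
        have h5 : (0:ℝ) ≤ Real.log x ^ (α/2) := by positivity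
        nlinarith [mul_nonneg (mul_nonneg hK0.le (sub_nonneg.mpr hL)) h5]
    _ = K * Real.log x ^ (α/2+1) := h4.symm

private lemma keyind (D : ℕ → ℂ) (α C K : ℝ) (hα : 0 ≤ α) (hC : 0 < C)
    (hD : ∀ x : ℝ, 2 ≤ x → ∑ n ∈ Finset.Icc 1 ⌊x⌋₊, ‖D n‖ ^ 2 ≤ C * x * Real.log x ^ α)
    (hK : K = 4 * Real.sqrt C / Real.log 2) :
    ∀ N : ℕ, ∀ x : ℝ, 2 ≤ x → x ≤ 2 ^ (N + 2) →
      ∑ n ∈ Finset.Icc 1 ⌊x⌋₊, ‖D n‖ / (n : ℝ) ≤ K * Real.log x ^ (α / 2 + 1) := by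
  have hl2 : 0 < Real.log 2 := Real.log_pos (by norm_num)
  have hK0 : 0 < K := by rw [hK]; positivity
  intro N
  induction N with
  | zero => intro x hx hx4; exact small D α C K hC hD hK x hx (by norm_num at hx4 ⊢; linarith)
  | succ N ih =>
    intro x hx hxu
    rcases le_or_gt x 4 with h4 | h4
    · exact small D α C K hC hD hK x hx h4
    -- x > 4
    have hx0 : (0:ℝ) < x := by linarith
    have hx2 : 2 ≤ x / 2 := by linarith
    have hx2u : x / 2 ≤ 2 ^ (N + 2) := by
      rw [div_le_iff₀ (by norm_num : (0:ℝ) < 2)]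
      calc x ≤ 2 ^ (N + 1 + 2) := hxu
        _ = 2 ^ (N + 2) * 2 := by ring
    have hL : Real.log 2 ≤ Real.log x := Real.log_le_log (by norm_num) hx
    have hL0 : 0 < Real.log x := lt_of_lt_of_le hl2 hL
    -- log of x/2
    have hlog2 : Real.log (x / 2) = Real.log x - Real.log 2 :=
      Real.log_div hx0.ne' (by norm_num)
    have hl2' : Real.log 2 ≤ Real.log (x/2) := Real.log_le_log (by norm_num) hx2
    have hlhalf0 : 0 < Real.log (x/2) := lt_of_lt_of_le hl2 hl2'
    -- split the sum
    have hm : ⌊x / 2⌋₊ ≤ ⌊x⌋₊ := Nat.floor_le_floor (by linarith)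
    have hsplit : ∑ n ∈ Finset.Icc 1 ⌊x⌋₊, ‖D n‖ / (n : ℝ)
        = (∑ n ∈ Finset.Icc 1 ⌊x/2⌋₊, ‖D n‖ / (n : ℝ))
          + ∑ n ∈ Finset.Ioc ⌊x/2⌋₊ ⌊x⌋₊, ‖D n‖ / (n : ℝ) := by
      rw [show Finset.Icc 1 ⌊x⌋₊ = Finset.Ioc 0 ⌊x⌋₊ from Finset.Icc_add_one_left_eq_Ioc _ _,
        show Finset.Icc 1 ⌊x/2⌋₊ = Finset.Ioc 0 ⌊x/2⌋₊ from Finset.Icc_add_one_left_eq_Ioc _ _,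
        Finset.sum_Ioc_consecutive _ (Nat.zero_le _) hm]
    -- bound the tail
    have htail : ∑ n ∈ Finset.Ioc ⌊x/2⌋₊ ⌊x⌋₊, ‖D n‖ / (n : ℝ)
        ≤ 2 / x * ∑ n ∈ Finset.Icc 1 ⌊x⌋₊, ‖D n‖ := by
      have step1 : ∑ n ∈ Finset.Ioc ⌊x/2⌋₊ ⌊x⌋₊, ‖D n‖ / (n : ℝ)
          ≤ ∑ n ∈ Finset.Ioc ⌊x/2⌋₊ ⌊x⌋₊, 2 / x * ‖D n‖ := by
        apply Finset.sum_le_sum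
        intro n hn
        have hn1 : ⌊x/2⌋₊ < n := (Finset.mem_Ioc.mp hn).1
        have hxn : x / 2 < n := by
          calc x / 2 < ⌊x/2⌋₊ + 1 := Nat.lt_floor_add_one _
            _ ≤ n := by exact_mod_cast hn1
        have hn0 : (0:ℝ) < n := by linarith
        rw [div_le_iff₀ hn0, mul_comm (2/x), mul_assoc]
        have h1n : 1 ≤ 2 / x * n := by
          rw [div_mul_eq_mul_div, le_div_iff₀ hx0]; linarith
        nlinarith [norm_nonneg (D n)]
      rw [Finset.mul_sum]
      apply step1.trans
      apply Finset.sum_le_sum_of_subset_of_nonneg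
      · intro n hn
        rw [Finset.mem_Ioc] at hn
        rw [Finset.mem_Icc]
        have h1 : 1 ≤ ⌊x/2⌋₊ := Nat.one_le_floor_iff _ |>.mpr (by linarith)
        exact ⟨le_trans h1 hn.1.le, hn.2⟩
      · intro n _ _; positivity
    have htail2 : 2 / x * ∑ n ∈ Finset.Icc 1 ⌊x⌋₊, ‖D n‖
        ≤ 2 * Real.sqrt C * Real.log x ^ (α / 2) := by
      have := csb D α C hC hD x hx
      calc 2 / x * ∑ n ∈ Finset.Icc 1 ⌊x⌋₊, ‖D n‖
          ≤ 2 / x * (Real.sqrt C * x * Real.log x ^ (α / 2)) := by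
            apply mul_le_mul_of_nonneg_left this (by positivity)
        _ = 2 * Real.sqrt C * Real.log x ^ (α / 2) := by field_simp
    -- IH on x/2
    have hIH := ih (x / 2) hx2 hx2u
    -- the key rpow inequality
    have hbeta : 0 ≤ α / 2 := by linarith
    have hkey : K * Real.log (x/2) ^ (α/2 + 1) + 2 * Real.sqrt C * Real.log x ^ (α/2)
        ≤ K * Real.log x ^ (α/2 + 1) := by
      have e1 : Real.log (x/2) ^ (α/2 + 1) = Real.log (x/2) ^ (α/2) * Real.log (x/2) :=
        Real.rpow_add_one hlhalf0.ne' _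
      have e2 : Real.log x ^ (α/2 + 1) = Real.log x ^ (α/2) * Real.log x :=
        Real.rpow_add_one hL0.ne' _
      have e3 : Real.log (x/2) ^ (α/2) ≤ Real.log x ^ (α/2) := by
        apply Real.rpow_le_rpow hlhalf0.le _ hbeta
        rw [hlog2]; linarith
      have e4 : 2 * Real.sqrt C ≤ K * Real.log 2 / 2 := by
        rw [hK]; rw [div_le_iff₀ (by norm_num : (0:ℝ) < 2)] at *
        field_simp
        nlinarith [Real.sqrt_nonneg C, hl2]
      have P0 : (0:ℝ) ≤ Real.log x ^ (α/2) := by positivity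
      have hlx2 : Real.log (x/2) ≤ Real.log x := by rw [hlog2]; linarith
      rw [e1, e2]
      calc K * (Real.log (x/2) ^ (α/2) * Real.log (x/2)) + 2 * Real.sqrt C * Real.log x ^ (α/2)
          ≤ K * (Real.log x ^ (α/2) * Real.log (x/2))
              + K * Real.log 2 / 2 * Real.log x ^ (α/2) := by
            refine add_le_add ?_ (mul_le_mul_of_nonneg_right e4 P0)
            exact mul_le_mul_of_nonneg_left (mul_le_mul_of_nonneg_right e3 hlhalf0.le) hK0.le
        _ = K * (Real.log x ^ (α/2) * Real.log x) - K * Real.log 2 / 2 * Real.log x ^ (α/2) := by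
            rw [hlog2]; ring
        _ ≤ K * (Real.log x ^ (α/2) * Real.log x) := by
            nlinarith [mul_nonneg (mul_nonneg hK0.le hl2.le) P0]
    calc ∑ n ∈ Finset.Icc 1 ⌊x⌋₊, ‖D n‖ / (n : ℝ)
        = (∑ n ∈ Finset.Icc 1 ⌊x/2⌋₊, ‖D n‖ / (n : ℝ))
          + ∑ n ∈ Finset.Ioc ⌊x/2⌋₊ ⌊x⌋₊, ‖D n‖ / (n : ℝ) := hsplit
      _ ≤ K * Real.log (x/2) ^ (α/2 + 1) + 2 * Real.sqrt C * Real.log x ^ (α/2) :=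
          add_le_add hIH (htail.trans htail2)
      _ ≤ K * Real.log x ^ (α/2 + 1) := hkey

/-- If `Σ_{n ≤ x} |D(n)|² ≪ x (log x)^α`, then for every `ε > 0`,
`Σ_{n ≤ x} |D(n)|/n ≪ (log x)^{α/2 + 1 + ε}`. -/
theorem stmt5 (D : ℕ → ℂ) (α : ℝ) (hα : 0 ≤ α)
    (hD : ∃ C : ℝ, 0 < C ∧ ∀ x : ℝ, 2 ≤ x →
      ∑ n ∈ Finset.Icc 1 ⌊x⌋₊, ‖D n‖ ^ 2 ≤ C * x * Real.log x ^ α) :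
    ∀ ε : ℝ, 0 < ε →
      ∃ C' : ℝ, 0 < C' ∧ ∀ x : ℝ, 2 ≤ x →
        ∑ n ∈ Finset.Icc 1 ⌊x⌋₊, ‖D n‖ / (n : ℝ)
          ≤ C' * Real.log x ^ (α / 2 + 1 + ε) := by
  obtain ⟨C, hC, hD'⟩ := hD
  intro ε hε
  have hl2 : 0 < Real.log 2 := Real.log_pos (by norm_num)
  set K := 4 * Real.sqrt C / Real.log 2 with hK
  have hK0 : 0 < K := by rw [hK]; positivity
  refine ⟨K * Real.log 2 ^ (-ε), by positivity, ?_⟩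
  intro x hx
  -- find N with x ≤ 2^(N+2)
  obtain ⟨N, hN⟩ : ∃ N : ℕ, x ≤ 2 ^ (N + 2) := by
    refine ⟨⌈x⌉₊, ?_⟩
    calc x ≤ (⌈x⌉₊ : ℝ) := Nat.le_ceil x
      _ ≤ (2:ℝ) ^ ⌈x⌉₊ := by exact_mod_cast (Nat.lt_two_pow_self (n := ⌈x⌉₊)).le
      _ ≤ (2:ℝ) ^ (⌈x⌉₊ + 2) := by
          apply pow_le_pow_right₀ (by norm_num); omega
  have hmain := keyind D α C K hα hC hD' hK N x hx hN
  apply hmain.trans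
  -- K * L^(α/2+1) ≤ K * log2^(-ε) * L^(α/2+1+ε)
  have hL : Real.log 2 ≤ Real.log x := Real.log_le_log (by norm_num) hx
  have hL0 : 0 < Real.log x := lt_of_lt_of_le hl2 hL
  have e1 : Real.log x ^ (α/2 + 1 + ε) = Real.log x ^ (α/2 + 1) * Real.log x ^ ε :=
    Real.rpow_add hL0 _ _
  have e2 : Real.log 2 ^ ε ≤ Real.log x ^ ε := Real.rpow_le_rpow hl2.le hL hε.le
  have e3 : Real.log 2 ^ (-ε) * Real.log 2 ^ ε = 1 := by
    rw [← Real.rpow_add hl2]; simp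
  calc K * Real.log x ^ (α/2 + 1)
      = K * Real.log 2 ^ (-ε) * (Real.log x ^ (α/2+1) * Real.log 2 ^ ε) := by
        rw [show K * Real.log 2 ^ (-ε) * (Real.log x ^ (α/2+1) * Real.log 2 ^ ε)
          = K * Real.log x ^ (α/2+1) * (Real.log 2 ^ (-ε) * Real.log 2 ^ ε) by ring, e3, mul_one]
    _ ≤ K * Real.log 2 ^ (-ε) * (Real.log x ^ (α/2+1) * Real.log x ^ ε) := by
        apply mul_le_mul_of_nonneg_left _ (by positivity)
        exact mul_le_mul_of_nonneg_left e2 (by positivity)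
    _ = K * Real.log 2 ^ (-ε) * Real.log x ^ (α/2 + 1 + ε) := by rw [e1]
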